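/- There exists ε > 0 such that for all real numbers a, x, y, δ with a > 1, x > y > 1 and 0 < δ < ε, at least one of the following two strict inequalities holds: sinSqAngle((x − 1, y, 1), (−1, a, 1), (−1, a + δ, 1)) > sinSqAngle((x, y, 1), (0, a, 1), (0, a + δ, 1)), or sinSqAngle((x, y − 1, 1), (0, a − 1, 1), (0, a + δ − 1, 1)) > sinSqAngle((x, y, 1), (0, a, 1), (0, a + δ, 1)). In other words, the pair of Jacobi–Perron transformations {V₁,₀;₀, V₀,₁;₀}, acting on coordinates by (X, Y, Z) ↦ (X − Z, Y, Z) and (X, Y, Z) ↦ (X, Y − Z, Z) respectively, p-max-asymptotically increases sin²α on the domain {(a, x, y) : a > 1, x > y > 1}. -/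
import Mathlib


noncomputable section

/-- Cross product on `ℝ³`. -/
def cross3 (u v : Fin 3 → ℝ) : Fin 3 → ℝ :=
  ![u 1 * v 2 - u 2 * v 1, u 2 * v 0 - u 0 * v 2, u 0 * v 1 - u 1 * v 0]

/-- Squared Euclidean norm on `ℝ³`. -/
def normSq3 (v : Fin 3 → ℝ) : ℝ := v 0 ^ 2 + v 1 ^ 2 + v 2 ^ 2

/-- Squared sine of the angle between the plane spanned by `u, v` and the plane
spanned by `u, w`. -/
def sinSqAngle (u v w : Fin 3 → ℝ) : ℝ :=
  normSq3 (cross3 (cross3 u v) (cross3 u w)) /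
    (normSq3 (cross3 u v) * normSq3 (cross3 u w))

private lemma aux1 (t s r : ℝ) (ht : 0 ≤ t) (hs : 0 ≤ s) (hr : 0 ≤ r) :
    0 ≤ 9 + 36*r + 61*r^2 + 58*r^3 + 32*r^4 + 8*r^5 + 18*s + 58*s*r + 84*s*r^2 + 68*s*r^3 + 24*s*r^4 + 10*s^2 + 34*s^2*r + 53*s^2*r^2 + 30*s^2*r^3 + 4*s^3 + 22*s^3*r + 22*s^3*r^2 + 5*s^4 + 10*s^4*r + 2*s^5 + 14*t + 48*t*r + 66*t*r^2 + 48*t*r^3 + 16*t*r^4 + 24*t*s + 62*t*s*r + 70*t*s*r^2 + 36*t*s*r^3 + 12*t*s^2 + 32*t*s^2*r + 32*t*s^2*r^2 + 6*t*s^3 + 16*t*s^3*r + 4*t*s^4 + 3*t^2 + 10*t^2*r + 11*t^2*r^2 + 6*t^2*r^3 + 6*t^2*s + 10*t^2*s*r + 10*t^2*s*r^2 + 1*t^2*s^2 + 6*t^2*s^2*r + 2*t^2*s^3 := by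
  have H : ∀ i j k : ℕ, 0 ≤ t^i * s^j * r^k := fun i j k =>
    mul_nonneg (mul_nonneg (pow_nonneg ht i) (pow_nonneg hs j)) (pow_nonneg hr k)
  linarith [H 0 0 1, H 0 0 2, H 0 0 3, H 0 0 4, H 0 0 5, H 0 1 0, H 0 1 1, H 0 1 2,
    H 0 1 3, H 0 1 4, H 0 2 0, H 0 2 1, H 0 2 2, H 0 2 3, H 0 3 0, H 0 3 1, H 0 3 2,
    H 0 4 0, H 0 4 1, H 0 5 0, H 1 0 0, H 1 0 1, H 1 0 2, H 1 0 3, H 1 0 4, H 1 1 0,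
    H 1 1 1, H 1 1 2, H 1 1 3, H 1 2 0, H 1 2 1, H 1 2 2, H 1 3 0, H 1 3 1, H 1 4 0,
    H 2 0 0, H 2 0 1, H 2 0 2, H 2 0 3, H 2 1 0, H 2 1 1, H 2 1 2, H 2 2 0, H 2 2 1,
    H 2 3 0]

private lemma key1 (x y b : ℝ) (hy : 1 ≤ y) (hxy : y ≤ x) (hb : x + y ≤ b) :
    (2*x-1) * ((y-b)^2 + x^2 + (b*(x-1)+y)^2) ≤
      2 * ((x-1)^2 + y^2 + 1) * ((b-y) * (2*b*x - b + y)) := by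
  have h := aux1 (b-(x+y)) (x-y) (y-1) (by linarith) (by linarith) (by linarith)
  linarith [h]

private lemma aux2 (u s r w : ℝ) (hu : 0 ≤ u) (hs : 0 ≤ s) (hr : 0 ≤ r) (hw : 0 ≤ w) :
    0 ≤ (3 + 8*r + 10*r^2 + 8*r^3 + 4*r^4 + 10*s + 22*s*r + 24*s*r^2 + 12*s*r^3 + 13*s^2 + 22*s^2*r + 14*s^2*r^2 + 8*s^3 + 8*s^3*r + 2*s^4 + 4*u + 10*u*r + 14*u*r^2 + 10*u*r^3 + 4*u*r^4 + 18*u*s + 34*u*s*r + 31*u*s*r^2 + 14*u*s*r^3 + 24*u*s^2 + 36*u*s^2*r + 20*u*s^2*r^2 + 15*u*s^3 + 14*u*s^3*r + 4*u*s^4)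
      + u*w*(2 + 6*r + 5*r^2 + 2*r^3 + 2*s + 6*s*r + 4*s*r^2 + 1*s^2 + 2*s^2*r) := by
  have H : ∀ i j k : ℕ, 0 ≤ u^i * s^j * r^k := fun i j k =>
    mul_nonneg (mul_nonneg (pow_nonneg hu i) (pow_nonneg hs j)) (pow_nonneg hr k)
  have HW : ∀ j k : ℕ, 0 ≤ u * w * (s^j * r^k) := fun j k =>
    mul_nonneg (mul_nonneg hu hw) (mul_nonneg (pow_nonneg hs j) (pow_nonneg hr k))
  linarith [H 0 0 1, H 0 0 2, H 0 0 3, H 0 0 4, H 0 1 0, H 0 1 1, H 0 1 2, H 0 1 3,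
    H 0 2 0, H 0 2 1, H 0 2 2, H 0 3 0, H 0 3 1, H 0 4 0, H 1 0 0, H 1 0 1, H 1 0 2,
    H 1 0 3, H 1 0 4, H 1 1 0, H 1 1 1, H 1 1 2, H 1 1 3, H 1 2 0, H 1 2 1, H 1 2 2,
    H 1 3 0, H 1 3 1, H 1 4 0, HW 0 0, HW 0 1, HW 0 2, HW 0 3, HW 1 0, HW 1 1, HW 1 2,
    HW 2 0, HW 2 1]

private lemma key2 (x y b : ℝ) (hy : 1 ≤ y) (hxy : y ≤ x) (hb1 : 1 ≤ b) (hb2 : b ≤ x + y + 1) :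
    (2*y-1) * ((y-b)^2 + x^2 + ((b-1)*x)^2) ≤
      2 * (x^2 + (y-1)^2 + 1) * (x^2 * (2*b-1)) := by
  have h := aux2 (b-1) (x-y) (y-1) (x+y+1-b) (by linarith) (by linarith) (by linarith)
    (by linarith)
  linarith [h]

private lemma L1 (x y b : ℝ) (hy : 1 < y) (hxy : y < x) (hb : x + y ≤ b) :
    (x^2+y^2+1) * ((y-b)^2 + x^2 + (b*(x-1)+y)^2)^2 <
      ((x-1)^2+y^2+1) * ((y-b)^2 + x^2 + (b*x)^2)^2 := by
  have hx : (0:ℝ) < x := by linarith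
  have hG1 : 0 < (y-b)^2 + x^2 + (b*(x-1)+y)^2 := by
    linarith [sq_nonneg (y-b), sq_nonneg (b*(x-1)+y), pow_pos hx 2]
  have hD : 0 < (b-y) * (2*b*x - b + y) := by
    have h1 : 0 < b - y := by linarith
    have h2 : 0 < 2*b*x - b + y := by nlinarith
    exact mul_pos h1 h2
  have hK := key1 x y b hy.le hxy.le hb
  have h5 := mul_le_mul_of_nonneg_right hK hG1.le
  have h6 : 0 < ((x-1)^2 + y^2 + 1) * ((b-y) * (2*b*x - b + y))^2 :=
    mul_pos (by positivity) (pow_pos hD 2)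
  linarith [h5, h6]

private lemma L2 (x y b : ℝ) (hy : 1 < y) (hxy : y < x) (hb1 : 1 < b) (hb2 : b ≤ x + y + 1) :
    (x^2+y^2+1) * ((y-b)^2 + x^2 + ((b-1)*x)^2)^2 <
      (x^2+(y-1)^2+1) * ((y-b)^2 + x^2 + (b*x)^2)^2 := by
  have hx : (0:ℝ) < x := by linarith
  have hG2 : 0 < (y-b)^2 + x^2 + ((b-1)*x)^2 := by
    linarith [sq_nonneg (y-b), sq_nonneg ((b-1)*x), pow_pos hx 2]
  have hE : 0 < x^2 * (2*b-1) := by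
    have h1 : (0:ℝ) < 2*b-1 := by linarith
    exact mul_pos (pow_pos hx 2) h1
  have hK := key2 x y b hy.le hxy.le hb1.le hb2
  have h5 := mul_le_mul_of_nonneg_right hK hG2.le
  have h6 : 0 < (x^2+(y-1)^2+1) * (x^2 * (2*b-1))^2 :=
    mul_pos (by positivity) (pow_pos hE 2)
  linarith [h5, h6]

private lemma combine (n0 n1 p q r t : ℝ) (hn0 : 0 < n0) (hr : 0 ≤ r) (ht : 0 ≤ t)
    (hn1 : 0 ≤ n1) (h1 : n0 * p^2 < n1 * r^2) (h2 : n0 * q^2 < n1 * t^2) :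
    n0 * (p * q) < n1 * (r * t) := by
  have hsq : (n0 * (p * q))^2 < (n1 * (r * t))^2 := by
    have hm : (n0 * p^2) * (n0 * q^2) < (n1 * r^2) * (n1 * t^2) :=
      mul_lt_mul'' h1 h2 (by positivity) (by positivity)
    calc (n0 * (p * q))^2 = (n0 * p^2) * (n0 * q^2) := by ring
      _ < (n1 * r^2) * (n1 * t^2) := hm
      _ = (n1 * (r * t))^2 := by ring
  exact lt_of_pow_lt_pow_left₀ 2 (by positivity) hsq

private lemma scale (c p q r s : ℝ) (hc : 0 < c) (h : p * q < r * s) :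
    c * p * q < c * r * s := by
  rw [mul_assoc, mul_assoc]
  exact mul_lt_mul_of_pos_left h hc

set_option maxHeartbeats 1000000 in
theorem stmt19 :
    ∃ ε > (0 : ℝ), ∀ a x y δ : ℝ, a > 1 → x > y → y > 1 → 0 < δ → δ < ε →
      (sinSqAngle ![x - 1, y, 1] ![-1, a, 1] ![-1, a + δ, 1] >
          sinSqAngle ![x, y, 1] ![0, a, 1] ![0, a + δ, 1]) ∨
      (sinSqAngle ![x, y - 1, 1] ![0, a - 1, 1] ![0, a + δ - 1, 1] >
          sinSqAngle ![x, y, 1] ![0, a, 1] ![0, a + δ, 1]) := by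
  refine ⟨1, one_pos, ?_⟩
  intro a x y δ ha hxy hy hδ hδ1
  have hx : 1 < x := lt_trans hy hxy
  have hxpos : (0:ℝ) < x := by linarith
  have e0 : sinSqAngle ![x, y, 1] ![0, a, 1] ![0, a + δ, 1] =
      (δ^2*x^2*(x^2+y^2+1)) /
        (((y-a)^2+x^2+(a*x)^2) * ((y-(a+δ))^2+x^2+((a+δ)*x)^2)) := by
    simp only [sinSqAngle, cross3, normSq3, Matrix.cons_val_zero, Matrix.cons_val_one,
      Matrix.head_cons, Matrix.cons_val_two, Matrix.tail_cons]
    ring_nf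
  have e1 : sinSqAngle ![x - 1, y, 1] ![-1, a, 1] ![-1, a + δ, 1] =
      (δ^2*x^2*((x-1)^2+y^2+1)) /
        (((y-a)^2+x^2+(a*(x-1)+y)^2) * ((y-(a+δ))^2+x^2+((a+δ)*(x-1)+y)^2)) := by
    simp only [sinSqAngle, cross3, normSq3, Matrix.cons_val_zero, Matrix.cons_val_one,
      Matrix.head_cons, Matrix.cons_val_two, Matrix.tail_cons]
    ring_nf
  have e2 : sinSqAngle ![x, y - 1, 1] ![0, a - 1, 1] ![0, a + δ - 1, 1] =
      (δ^2*x^2*(x^2+(y-1)^2+1)) /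
        (((y-a)^2+x^2+((a-1)*x)^2) * ((y-(a+δ))^2+x^2+(((a+δ)-1)*x)^2)) := by
    simp only [sinSqAngle, cross3, normSq3, Matrix.cons_val_zero, Matrix.cons_val_one,
      Matrix.head_cons, Matrix.cons_val_two, Matrix.tail_cons]
    ring_nf
  have hδx : 0 < δ^2*x^2 := by positivity
  have hN0 : (0:ℝ) < x^2+y^2+1 := by positivity
  have hG0a : 0 < (y-a)^2+x^2+(a*x)^2 := by
    linarith [sq_nonneg (y-a), sq_nonneg (a*x), pow_pos hxpos 2]
  have hG0d : 0 < (y-(a+δ))^2+x^2+((a+δ)*x)^2 := by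
    linarith [sq_nonneg (y-(a+δ)), sq_nonneg ((a+δ)*x), pow_pos hxpos 2]
  have hG0a' : (0:ℝ) ≤ (y-a)^2+x^2+(a*x)^2 := hG0a.le
  have hG0d' : (0:ℝ) ≤ (y-(a+δ))^2+x^2+((a+δ)*x)^2 := hG0d.le
  rcases le_or_gt (x + y) a with hcase | hcase
  · -- use the first transformation
    left
    rw [e0, e1, gt_iff_lt]
    have hG1a : 0 < (y-a)^2+x^2+(a*(x-1)+y)^2 := by
      linarith [sq_nonneg (y-a), sq_nonneg (a*(x-1)+y), pow_pos hxpos 2]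
    have hG1d : 0 < (y-(a+δ))^2+x^2+((a+δ)*(x-1)+y)^2 := by
      linarith [sq_nonneg (y-(a+δ)), sq_nonneg ((a+δ)*(x-1)+y), pow_pos hxpos 2]
    rw [div_lt_div_iff₀ (mul_pos hG0a hG0d) (mul_pos hG1a hG1d)]
    have h1 := L1 x y a hy hxy hcase
    have h2 := L1 x y (a+δ) hy hxy (by linarith)
    exact scale _ _ _ _ _ hδx
      (combine _ _ _ _ _ _ hN0 hG0a' hG0d' (by positivity) h1 h2)
  · -- use the second transformation
    right
    rw [e0, e2, gt_iff_lt]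
    have hG2a : 0 < (y-a)^2+x^2+((a-1)*x)^2 := by
      linarith [sq_nonneg (y-a), sq_nonneg ((a-1)*x), pow_pos hxpos 2]
    have hG2d : 0 < (y-(a+δ))^2+x^2+(((a+δ)-1)*x)^2 := by
      linarith [sq_nonneg (y-(a+δ)), sq_nonneg (((a+δ)-1)*x), pow_pos hxpos 2]
    rw [div_lt_div_iff₀ (mul_pos hG0a hG0d) (mul_pos hG2a hG2d)]
    have h1 := L2 x y a hy hxy ha (by linarith)
    have h2 := L2 x y (a+δ) hy hxy (by linarith) (by linarith)
    exact scale _ _ _ _ _ hδx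
      (combine _ _ _ _ _ _ hN0 hG0a' hG0d' (by positivity) h1 h2)
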